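/- Let q be a power of an odd prime. For any multiplicative characters A, B₁, …, B_n, C of 𝔽_q^× and any λ₁, …, λ_n ∈ 𝔽_q, ℙ_D^{(n)}[A; B₁,…,B_n; C; λ₁,…,λ_n] = A(−1) · ℙ_D^{(n)}[A; B₁,…,B_n; A·C̄·B₁B₂⋯B_n; 1−λ₁, …, 1−λ_n]. -/

import Mathlib

open Finset

/-- Jacobi sum `J(A,B) = Σ_x A(x) B(1-x)`. -/
noncomputable def jacobiSum' {F : Type} [Field F] [Fintype F] (A B : MulChar F ℂ) : ℂ :=
  ∑ x : F, A x * B (1 - x)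

/-- One-variable finite-field period function `ℙ_D^{(1)}[A; B; C; λ]`. -/
noncomputable def P1 {F : Type} [Field F] [Fintype F] (A B C : MulChar F ℂ) (l : F) : ℂ :=
  ∑ y : F, A y * (C * A⁻¹) (1 - y) * B⁻¹ (1 - l * y)

/-- Two-variable finite-field Appell–Lauricella period function `ℙ_D^{(2)}`. -/
noncomputable def P2 {F : Type} [Field F] [Fintype F] (A B₁ B₂ C : MulChar F ℂ) (l₁ l₂ : F) : ℂ :=
  ∑ y : F, A y * (C * A⁻¹) (1 - y) * B₁⁻¹ (1 - l₁ * y) * B₂⁻¹ (1 - l₂ * y)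

/-- n-variable finite-field Appell–Lauricella period function `ℙ_D^{(n)}`. -/
noncomputable def PDn {F : Type} [Field F] [Fintype F] (n : ℕ) (A : MulChar F ℂ)
    (B : Fin n → MulChar F ℂ) (C : MulChar F ℂ) (l : Fin n → F) : ℂ :=
  ∑ y : F, A y * (C * A⁻¹) (1 - y) * ∏ i, (B i)⁻¹ (1 - l i * y)

/-- Normalized two-variable Appell–Lauricella function `𝔽_D^{(2)}`. -/
noncomputable def F2 {F : Type} [Field F] [Fintype F] (A B₁ B₂ C : MulChar F ℂ) (l₁ l₂ : F) : ℂ :=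
  P2 A B₁ B₂ C l₁ l₂ / jacobiSum' A (C * A⁻¹)

/-- Normalized n-variable Appell–Lauricella function `𝔽_D^{(n)}`. -/
noncomputable def FDn {F : Type} [Field F] [Fintype F] (n : ℕ) (A : MulChar F ℂ)
    (B : Fin n → MulChar F ℂ) (C : MulChar F ℂ) (l : Fin n → F) : ℂ :=
  PDn n A B C l / jacobiSum' A (C * A⁻¹)

/-- Finite-field Gauss hypergeometric function `₂𝔽₁[A,B;C;λ] = ℙ_D^{(1)}[B;A;C;λ]/J(B,C B̄)`. -/
noncomputable def twoF1 {F : Type} [Field F] [Fintype F] (A B C : MulChar F ℂ) (l : F) : ℂ :=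
  P1 B A C l / jacobiSum' B (C * B⁻¹)

open scoped Classical in
/-- `δ(x) = 1` if `x = 0`, else `0`. -/
noncomputable def deltaC {F : Type} [Field F] [Fintype F] (x : F) : ℂ :=
  if x = 0 then 1 else 0

noncomputable instance {F : Type} [Field F] [Fintype F] : Fintype (MulChar F ℂ) :=
  Fintype.ofFinite _

/-- Character binomial coefficient `(A choose χ) = -χ(-1) J(A, χ̄)`. -/
noncomputable def charBinom {F : Type} [Field F] [Fintype F] (A χ : MulChar F ℂ) : ℂ :=
  -χ (-1) * jacobiSum' A χ⁻¹

private lemma mulChar_prod_apply' {F : Type} [Field F] [Fintype F] {n : ℕ}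
    (B : Fin n → MulChar F ℂ) {u : F} (hu : u ≠ 0) :
    (∏ i, B i) u = ∏ i, B i u := by
  let e : MulChar F ℂ →* ℂ :=
    { toFun := fun χ => χ u
      map_one' := MulChar.one_apply (isUnit_iff_ne_zero.mpr hu)
      map_mul' := fun χ ψ => by simp }
  exact map_prod e B Finset.univ

/-- transformation `λᵢ ↦ 1 - λᵢ` for `ℙ_D^{(n)}`. -/
theorem statement_6 (F : Type) [Field F] [Fintype F] (hq : Odd (Fintype.card F))
    (n : ℕ) (A C : MulChar F ℂ) (B : Fin n → MulChar F ℂ) (l : Fin n → F) :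
    PDn n A B C l =
      A (-1) * PDn n A B (A * C⁻¹ * ∏ i, B i) (fun i => 1 - l i) := by
  classical
  unfold PDn
  rw [Finset.mul_sum]
  set f : F → ℂ := fun y => A y * (C * A⁻¹) (1 - y) * ∏ i, (B i)⁻¹ (1 - l i * y) with hf
  set g : F → ℂ := fun y =>
    A (-1) * (A y * (A * C⁻¹ * (∏ i, B i) * A⁻¹) (1 - y) *
      ∏ i, (B i)⁻¹ (1 - (1 - l i) * y)) with hg
  have hzero : ∀ y : F, (y = 0 ∨ y = 1) → f y = 0 ∧ g y = 0 := by
    rintro y (rfl | rfl)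
    · constructor <;> simp [hf, hg, MulChar.map_zero]
    · refine ⟨?_, ?_⟩
      · show A 1 * (C * A⁻¹) (1 - 1) * _ = 0
        rw [sub_self, MulChar.map_zero]
        ring
      · show A (-1) * (A 1 * (A * C⁻¹ * (∏ i, B i) * A⁻¹) (1 - 1) * _) = 0
        rw [sub_self, MulChar.map_zero]
        ring
  have hs : ∀ (h : F → ℂ), (∀ y, (y = 0 ∨ y = 1) → h y = 0) →
      ∑ y : F, h y = ∑ y ∈ Finset.univ.filter (fun y : F => y ≠ 0 ∧ y ≠ 1), h y := by
    intro h hh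
    rw [Finset.sum_filter_of_ne]
    intro x _ hx
    by_contra hc
    push_neg at hc
    rcases em (x = 0) with h0 | h0
    · exact hx (hh x (Or.inl h0))
    · exact hx (hh x (Or.inr (hc h0)))
  rw [hs f (fun y hy => (hzero y hy).1), hs g (fun y hy => (hzero y hy).2)]
  have hmem : ∀ y ∈ Finset.univ.filter (fun y : F => y ≠ 0 ∧ y ≠ 1),
      y / (y - 1) ∈ Finset.univ.filter (fun y : F => y ≠ 0 ∧ y ≠ 1) := by
    intro y hy
    simp only [Finset.mem_filter, Finset.mem_univ, true_and] at hy ⊢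
    have h1 : y - 1 ≠ 0 := sub_ne_zero.mpr hy.2
    refine ⟨div_ne_zero hy.1 h1, fun hc => ?_⟩
    rw [div_eq_one_iff_eq h1] at hc
    exact one_ne_zero (α := F) (by linear_combination hc)
  have hinv : ∀ y ∈ Finset.univ.filter (fun y : F => y ≠ 0 ∧ y ≠ 1),
      y / (y - 1) / (y / (y - 1) - 1) = y := by
    intro y hy
    simp only [Finset.mem_filter, Finset.mem_univ, true_and] at hy
    have h1 : y - 1 ≠ 0 := sub_ne_zero.mpr hy.2
    have h2 : y / (y - 1) - 1 = 1 / (y - 1) := by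
      rw [div_sub_one h1]
      congr 1
      ring
    rw [h2, one_div, div_eq_mul_inv, inv_inv, div_mul_cancel₀ _ h1]
  refine (Finset.sum_nbij' (fun y => y / (y - 1)) (fun y => y / (y - 1))
    hmem hmem hinv hinv ?_).symm
  intro y hy
  simp only [Finset.mem_filter, Finset.mem_univ, true_and] at hy
  obtain ⟨hy0, hy1⟩ := hy
  have hy1' : y - 1 ≠ 0 := sub_ne_zero.mpr hy1
  set u : F := 1 - y with hu
  have hu0 : u ≠ 0 := by
    rw [hu]
    intro h
    exact hy1 (by linear_combination -h)
  have key : ∀ χ : MulChar F ℂ, χ u⁻¹ = χ⁻¹ u := fun χ => (MulChar.inv_apply' χ u).symm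
  have hz : y / (y - 1) = (-1) * y * u⁻¹ := by
    rw [hu]
    field_simp
    ring
  have h1z : 1 - y / (y - 1) = u⁻¹ := by
    have hm : (1 - y / (y - 1)) * u = 1 := by rw [hu]; field_simp; ring
    exact eq_inv_of_mul_eq_one_left hm
  have h2 : ∀ i : Fin n, 1 - l i * (y / (y - 1)) = (1 - (1 - l i) * y) * u⁻¹ := by
    intro i
    have hm : (1 - l i * (y / (y - 1))) * u = 1 - (1 - l i) * y := by
      rw [hu]; field_simp; ring
    rw [← hm, mul_assoc, mul_inv_cancel₀ hu0, mul_one]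
  simp only [hg, hf, h2]
  rw [h1z, hz]
  rw [map_mul, map_mul, key A, key (C * A⁻¹)]
  have h3 : ∀ i : Fin n, (B i)⁻¹ ((1 - (1 - l i) * y) * u⁻¹)
      = (B i)⁻¹ (1 - (1 - l i) * y) * B i u := by
    intro i
    rw [map_mul, key, inv_inv]
  simp only [h3]
  rw [Finset.prod_mul_distrib, ← mulChar_prod_apply' B hu0]
  simp only [mul_inv, inv_inv, MulChar.mul_apply]
  ring
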